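/- arXiv:math/0410096 — 3 statements merged into one kernel-verified Lean document; each statement's English description precedes it below -/
import Mathlib

section
/- Let X be a real Banach space and ε > 0. A set {x_1, …, x_n} ⊆ B_X is ε-shattered by B_{X*} if and only if x_1, …, x_n are linearly independent and ε-dominate the ℓ_1^n unit-vector basis, i.e., for all reals a_1, …, a_n, ε·Σ_{i=1}^n |a_i| ≤ ‖Σ_{i=1}^n a_i x_i‖. -/
open scoped BigOperators

/-- A finite family of points, viewed as the set of its values, is `ε`-shattered by a class `F`
of real-valued functions. -/
def EpsShattered {Ω : Type*} (F : Set (Ω → ℝ)) (ε : ℝ) {n : ℕ} (x : Fin n → Ω) : Prop :=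
  ∃ s : Ω → ℝ, ∀ I : Finset (Fin n), ∃ f ∈ F,
    (∀ i, i ∈ I → s (x i) + ε ≤ f (x i)) ∧ (∀ i, i ∉ I → f (x i) ≤ s (x i) - ε)

/-- The closed unit ball of the dual of `X`, viewed as a class of real-valued functions on `X`. -/
def DualBallFuns (X : Type*) [NormedAddCommGroup X] [NormedSpace ℝ X] : Set (X → ℝ) :=
  {g : X → ℝ | ∃ f : X →L[ℝ] ℝ, ‖f‖ ≤ 1 ∧ g = ⇑f}

/-- A set `{x_1, …, x_n} ⊆ B_X` is `ε`-shattered by `B_{X*}` if and only if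
`x_1, …, x_n` are linearly independent and `ε`-dominate the `ℓ_1^n` unit-vector basis. -/
theorem stmt1 {X : Type*} [NormedAddCommGroup X] [NormedSpace ℝ X] [CompleteSpace X]
    (ε : ℝ) (hε : 0 < ε) {n : ℕ} (x : Fin n → X) (hx : ∀ i, ‖x i‖ ≤ 1) :
    EpsShattered (DualBallFuns X) ε x ↔
      (LinearIndependent ℝ x ∧ ∀ a : Fin n → ℝ, ε * ∑ i, |a i| ≤ ‖∑ i, a i • x i‖) := by
  unfold EpsShattered DualBallFuns
  constructor
  · rintro ⟨s, hs⟩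
    have dom : ∀ a : Fin n → ℝ, ε * ∑ i, |a i| ≤ ‖∑ i, a i • x i‖ := by
      intro a
      set I : Finset (Fin n) := Finset.univ.filter (fun i => 0 ≤ a i) with hI
      obtain ⟨f, ⟨F, hF, rfl⟩, hf1, hf2⟩ := hs I
      obtain ⟨g, ⟨G, hG, rfl⟩, hg1, hg2⟩ := hs Iᶜ
      have key : ∀ i, ε * |a i| ≤ a i * ((F (x i) - G (x i)) / 2) := by
        intro i
        by_cases h : i ∈ I
        · have ha : 0 ≤ a i := by simpa [hI] using h
          have h1 := hf1 i h
          have h2 := hg2 i (by simp [h])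
          rw [abs_of_nonneg ha]
          nlinarith
        · have ha : a i < 0 := by
            by_contra hcon
            exact h (by simp [hI]; linarith)
          have h1 := hf2 i h
          have h2 := hg1 i (by simp [h])
          rw [abs_of_neg ha]
          nlinarith
      have hsum : ∑ i, a i * (F (x i) - G (x i)) = (F - G) (∑ i, a i • x i) := by
        simp [map_sum, ContinuousLinearMap.sub_apply, smul_eq_mul, mul_sub]
      have hnorm : ‖(F - G) (∑ i, a i • x i)‖ ≤ 2 * ‖∑ i, a i • x i‖ := by
        calc ‖(F - G) (∑ i, a i • x i)‖ ≤ ‖F - G‖ * ‖∑ i, a i • x i‖ :=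
              (F - G).le_opNorm _
          _ ≤ 2 * ‖∑ i, a i • x i‖ := by
              have := norm_sub_le F G
              have h0 : (0:ℝ) ≤ ‖∑ i, a i • x i‖ := norm_nonneg _
              nlinarith
      have h1 : ε * ∑ i, |a i| ≤ ∑ i, a i * ((F (x i) - G (x i)) / 2) := by
        rw [Finset.mul_sum]
        exact Finset.sum_le_sum fun i _ => key i
      have h2 : ∑ i, a i * ((F (x i) - G (x i)) / 2)
          = (∑ i, a i * (F (x i) - G (x i))) / 2 := by
        rw [Finset.sum_div]
        exact Finset.sum_congr rfl fun i _ => by ring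
      rw [h2, hsum] at h1
      have := le_abs_self ((F - G) (∑ i, a i • x i))
      rw [Real.norm_eq_abs] at hnorm
      linarith
    refine ⟨?_, dom⟩
    rw [Fintype.linearIndependent_iff]
    intro a ha i
    have hd := dom a
    rw [ha, norm_zero] at hd
    have h0 : ∑ j, |a j| ≤ 0 := by nlinarith
    have := Finset.sum_eq_zero_iff_of_nonneg (fun j _ => abs_nonneg (a j)) |>.mp
      (le_antisymm h0 (Finset.sum_nonneg fun j _ => abs_nonneg (a j)))
    exact abs_eq_zero.mp (this i (Finset.mem_univ i))
  · rintro ⟨hli, hdom⟩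
    refine ⟨0, fun I => ?_⟩
    set a : Fin n → ℝ := fun i => if i ∈ I then 1 else -1 with ha
    set p := Submodule.span ℝ (Set.range x) with hp
    let b : Module.Basis (Fin n) ℝ p := Module.Basis.span hli
    let φ : p →ₗ[ℝ] ℝ := b.constr ℝ (fun i => ε * a i)
    have habs : ∀ i, |a i| = 1 := by
      intro i; by_cases h : i ∈ I <;> simp [ha, h]
    have hφapp : ∀ y : p, φ y = ∑ i, b.repr y i * (ε * a i) := by
      intro y
      rw [Module.Basis.constr_apply_fintype]
      simp [Module.Basis.equivFun_apply, smul_eq_mul]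
    have hycoe : ∀ y : p, (y : X) = ∑ i, b.repr y i • x i := by
      intro y
      conv_lhs => rw [← b.sum_repr y]
      push_cast
      exact Finset.sum_congr rfl fun i _ => by rw [Module.Basis.span_apply]
    have hbound : ∀ y : p, ‖φ y‖ ≤ 1 * ‖y‖ := by
      intro y
      rw [hφapp, one_mul]
      have h1 : ‖∑ i, b.repr y i * (ε * a i)‖ ≤ ∑ i, |b.repr y i * (ε * a i)| := by
        simpa [Real.norm_eq_abs] using
          (Finset.abs_sum_le_sum_abs (fun i => b.repr y i * (ε * a i)) Finset.univ)
      have h2 : ∑ i, |b.repr y i * (ε * a i)| = ε * ∑ i, |b.repr y i| := by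
        rw [Finset.mul_sum]
        refine Finset.sum_congr rfl fun i _ => ?_
        rw [abs_mul, abs_mul, habs i, abs_of_pos hε]; ring
      have h3 := hdom (fun i => b.repr y i)
      have h4 : ‖(y : X)‖ = ‖y‖ := rfl
      rw [hycoe y] at h4
      linarith [h1, h2 ▸ h1]
    let Φ : p →L[ℝ] ℝ := φ.mkContinuous 1 hbound
    obtain ⟨g, hg, hgnorm⟩ := exists_extension_norm_eq p Φ
    have hgle : ‖g‖ ≤ 1 := by
      rw [hgnorm]
      exact φ.mkContinuous_norm_le zero_le_one hbound
    have hgx : ∀ i, g (x i) = ε * a i := by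
      intro i
      have hbi : ((b i : p) : X) = x i := congrArg Subtype.val (Module.Basis.span_apply hli i)
      have h1 := hg (b i)
      rw [hbi] at h1
      rw [h1]
      show Φ (b i) = ε * a i
      simp [Φ, φ, LinearMap.mkContinuous_apply, Module.Basis.constr_basis]
    refine ⟨⇑g, ⟨g, hgle, rfl⟩, fun i hi => ?_, fun i hi => ?_⟩
    · rw [hgx i]; simp [ha, hi]
    · rw [hgx i]; simp [ha, hi]
end

section
/- Let X be a real Banach space, let 1 < p ≤ 2, and suppose T ≥ 1 is a constant such that for every n and every x_1, …, x_n ∈ X, 𝔼‖Σ_{i=1}^n ε_i x_i‖ ≤ T·(Σ_{i=1}^n ‖x_i‖^p)^{1/p}, where (ε_i) are independent Rademacher random variables (taking values ±1 with probability 1/2 each). Then for every ε > 0, every subset of B_X that is ε-shattered by B_{X*} has cardinality at most (T/ε)^{p/(p−1)} + 1. -/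
open scoped BigOperators

lemma sign_sum_zero (n : ℕ) (i : Fin n) :
    ∑ σ : Fin n → Bool, (if σ i then (1:ℝ) else -1) = 0 := by
  refine Finset.sum_involution (fun σ _ => Function.update σ i (!σ i)) ?_ ?_ ?_ ?_
  · intro σ _
    simp [Function.update_self]
    cases h : σ i <;> simp [h]
  · intro σ _ _ hc
    have := congrFun hc i
    simp [Function.update_self] at this
  · intro σ _; exact Finset.mem_univ _
  · intro σ _
    funext j
    by_cases hj : j = i
    · subst hj; simp
    · simp [Function.update_of_ne hj]

/-- If `X` has Rademacher type `p` (`1 < p ≤ 2`) with constant `T ≥ 1`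
(the expectation over signs being written as an average over all `2^n` sign patterns), then
every subset of `B_X` that is `ε`-shattered by `B_{X*}` has cardinality at most
`(T/ε)^{p/(p-1)} + 1`. -/
theorem stmt2 {X : Type*} [NormedAddCommGroup X] [NormedSpace ℝ X] [CompleteSpace X]
    (p T : ℝ) (hp1 : 1 < p) (hp2 : p ≤ 2) (hT : 1 ≤ T)
    (htype : ∀ (n : ℕ) (x : Fin n → X),
      (∑ σ : Fin n → Bool, ‖∑ i, (if σ i then (1 : ℝ) else -1) • x i‖) ≤
        2 ^ n * (T * (∑ i, ‖x i‖ ^ p) ^ p⁻¹)) :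
    ∀ ε : ℝ, 0 < ε → ∀ (n : ℕ) (x : Fin n → X), Function.Injective x →
      (∀ i, ‖x i‖ ≤ 1) → EpsShattered (DualBallFuns X) ε x →
      (n : ℝ) ≤ (T / ε) ^ (p / (p - 1)) + 1 := by
  intro ε hε n x hinj hball hsh
  have hp0 : (0:ℝ) < p := by linarith
  obtain ⟨s, hs⟩ := hsh
  -- key per-sign bound
  have key : ∀ σ : Fin n → Bool,
      (∑ i, (if σ i then s (x i) else -(s (x i)))) + n * ε ≤
        ‖∑ i, (if σ i then (1:ℝ) else -1) • x i‖ := by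
    intro σ
    obtain ⟨f, hfF, hf1, hf2⟩ := hs (Finset.univ.filter (fun i => σ i = true))
    obtain ⟨g, hg, rfl⟩ := hfF
    have h1 : ∀ i, (if σ i then s (x i) else -(s (x i))) + ε ≤
        (if σ i then (1:ℝ) else -1) * g (x i) := by
      intro i
      by_cases h : σ i = true
      · have := hf1 i (by simp [h])
        rw [if_pos h, if_pos h, one_mul]
        linarith
      · have := hf2 i (by simp [h])
        rw [if_neg h, if_neg h]
        linarith
    have hsum : (∑ i, (if σ i then s (x i) else -(s (x i)))) + n * ε ≤
        ∑ i, (if σ i then (1:ℝ) else -1) * g (x i) := by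
      have := Finset.sum_le_sum (fun i (_ : i ∈ Finset.univ) => h1 i)
      simpa [Finset.sum_add_distrib, Finset.card_univ, mul_comm] using this
    have heq : ∑ i, (if σ i then (1:ℝ) else -1) * g (x i) =
        g (∑ i, (if σ i then (1:ℝ) else -1) • x i) := by
      rw [map_sum]
      exact Finset.sum_congr rfl fun i _ => by rw [map_smul]; rfl
    have hle : g (∑ i, (if σ i then (1:ℝ) else -1) • x i) ≤
        ‖∑ i, (if σ i then (1:ℝ) else -1) • x i‖ := by
      refine le_trans (le_abs_self _) ?_
      calc |g (∑ i, (if σ i then (1:ℝ) else -1) • x i)| = ‖g (∑ i, (if σ i then (1:ℝ) else -1) • x i)‖ := rfl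
        _ ≤ ‖g‖ * ‖∑ i, (if σ i then (1:ℝ) else -1) • x i‖ := g.le_opNorm _
        _ ≤ 1 * ‖∑ i, (if σ i then (1:ℝ) else -1) • x i‖ :=
            mul_le_mul_of_nonneg_right hg (norm_nonneg _)
        _ = _ := one_mul _
    linarith [hsum, heq ▸ hsum, hle]
  -- sum over all sign patterns
  have hzero : ∑ σ : Fin n → Bool, ∑ i, (if σ i then s (x i) else -(s (x i))) = 0 := by
    rw [Finset.sum_comm]
    refine Finset.sum_eq_zero fun i _ => ?_
    have : ∀ σ : Fin n → Bool, (if σ i then s (x i) else -(s (x i))) =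
        (if σ i then (1:ℝ) else -1) * s (x i) := by
      intro σ; by_cases h : σ i <;> simp [h]
    rw [Finset.sum_congr rfl fun σ _ => this σ, ← Finset.sum_mul, sign_sum_zero n i, zero_mul]
  have hcard : (Finset.univ : Finset (Fin n → Bool)).card = 2 ^ n := by
    simp [Finset.card_univ]
  have hbig : (2:ℝ) ^ n * (n * ε) ≤ 2 ^ n * (T * (∑ i, ‖x i‖ ^ p) ^ p⁻¹) := by
    have h1 := Finset.sum_le_sum (fun σ (_ : σ ∈ Finset.univ) => key σ)
    have h2 : ∑ σ : Fin n → Bool,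
        ((∑ i, (if σ i then s (x i) else -(s (x i)))) + n * ε) = 2 ^ n * (n * ε) := by
      rw [Finset.sum_add_distrib, hzero, zero_add, Finset.sum_const, hcard]
      push_cast
      ring
    calc (2:ℝ) ^ n * (n * ε) = _ := h2.symm
      _ ≤ ∑ σ : Fin n → Bool, ‖∑ i, (if σ i then (1:ℝ) else -1) • x i‖ := h1
      _ ≤ 2 ^ n * (T * (∑ i, ‖x i‖ ^ p) ^ p⁻¹) := htype n x
  have h2pos : (0:ℝ) < 2 ^ n := by positivity
  have hmain : (n:ℝ) * ε ≤ T * (∑ i, ‖x i‖ ^ p) ^ p⁻¹ :=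
    le_of_mul_le_mul_left hbig h2pos
  -- bound the sum of p-th powers
  have hsum_le : (∑ i, ‖x i‖ ^ p) ≤ (n:ℝ) := by
    calc (∑ i, ‖x i‖ ^ p) ≤ ∑ _i : Fin n, (1:ℝ) :=
        Finset.sum_le_sum fun i _ =>
          Real.rpow_le_one (norm_nonneg _) (hball i) hp0.le
      _ = n := by simp
  have hA : (∑ i, ‖x i‖ ^ p) ^ p⁻¹ ≤ (n:ℝ) ^ p⁻¹ :=
    Real.rpow_le_rpow (Finset.sum_nonneg fun i _ => Real.rpow_nonneg (norm_nonneg _) _)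
      hsum_le (by positivity)
  have hmain2 : (n:ℝ) * ε ≤ T * (n:ℝ) ^ p⁻¹ :=
    hmain.trans (mul_le_mul_of_nonneg_left hA (by linarith))
  -- finish
  rcases Nat.eq_zero_or_pos n with hn | hn
  · subst hn; simp; positivity
  · have hn1 : (1:ℝ) ≤ (n:ℝ) := by exact_mod_cast hn
    have hnpos : (0:ℝ) < (n:ℝ) := by linarith
    have hsplit : (n:ℝ) = (n:ℝ) ^ (1 - p⁻¹) * (n:ℝ) ^ p⁻¹ := by
      rw [← Real.rpow_add hnpos]
      simp
    have hstep : (n:ℝ) ^ (1 - p⁻¹) ≤ T / ε := by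
      rw [le_div_iff₀ hε]
      have hpow_pos : (0:ℝ) < (n:ℝ) ^ p⁻¹ := Real.rpow_pos_of_pos hnpos _
      have : (n:ℝ) ^ (1 - p⁻¹) * (n:ℝ) ^ p⁻¹ * ε ≤ T * (n:ℝ) ^ p⁻¹ := by
        rw [← hsplit]; exact hmain2
      nlinarith [hpow_pos]
    have hq : (0:ℝ) ≤ p / (p - 1) := div_nonneg (by linarith) (by linarith)
    have hfin : ((n:ℝ) ^ (1 - p⁻¹)) ^ (p / (p - 1)) ≤ (T / ε) ^ (p / (p - 1)) :=
      Real.rpow_le_rpow (Real.rpow_nonneg hnpos.le _) hstep hq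
    have hne : p - 1 ≠ 0 := by linarith
    have hexp : (1 - p⁻¹) * (p / (p - 1)) = 1 := by
      field_simp
    have hpow : ((n:ℝ) ^ (1 - p⁻¹)) ^ (p / (p - 1)) = (n:ℝ) := by
      rw [← Real.rpow_mul hnpos.le, hexp, Real.rpow_one]
    rw [hpow] at hfin
    linarith
end

section
/- For every 1 ≤ p, q ≤ ∞ there is a constant C_{p,q} such that for every n, Γ_n(B_p^n, B_q^n) ≤ C_{p,q}·n^θ, where θ = 1/2 + 1/p − 1/q if 2 ≤ p, q ≤ ∞; θ = 1 − 1/q if 1 ≤ p ≤ 2; θ = 1 − 1/q if 1 ≤ q ≤ 2 ≤ p ≤ ∞ and p' > q; and θ = 1/p if 1 ≤ q ≤ 2 ≤ p ≤ ∞ and p' ≤ q. Equivalently, there exist x_1, …, x_n ∈ B_p^n with (C_{p,q}^{-1} n^{−θ})·B_q^n ⊆ absconv(x_1, …, x_n). -/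
open scoped BigOperators ENNReal Pointwise

open Finset Real

/-- The unit ball of `ℓ_p^n` (`1 ≤ p ≤ ∞`), as a subset of `ℝ^n`. -/
noncomputable def pball (p : ℝ≥0∞) (n : ℕ) : Set (EuclideanSpace ℝ (Fin n)) :=
  {x | (if p = ∞ then ⨆ i, |x i| else (∑ i, |x i| ^ p.toReal) ^ p.toReal⁻¹) ≤ 1}

/-- There exist `x_1, …, x_n ∈ B_p^n` with `ε·B_q^n ⊆ absconv(x_1, …, x_n)`;
equivalently (by Lemma 4.5 of the paper), `Γ_n(B_p^n, B_q^n) ≤ 1/ε`. -/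
def FactorsAt (p q : ℝ≥0∞) (n : ℕ) (ε : ℝ) : Prop :=
  ∃ x : Fin n → EuclideanSpace ℝ (Fin n), (∀ i, x i ∈ pball p n) ∧
    ε • pball q n ⊆ convexHull ℝ (Set.range x ∪ -Set.range x)

lemma one_le_toReal {p : ℝ≥0∞} (hp : 1 ≤ p) (hp' : p ≠ ∞) : 1 ≤ p.toReal := by
  rw [← ENNReal.toReal_one]
  exact ENNReal.toReal_mono hp' hp

lemma mem_pball_finite {p : ℝ≥0∞} (hp : 1 ≤ p) (hp' : p ≠ ∞) {n : ℕ}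
    {x : EuclideanSpace ℝ (Fin n)} :
    x ∈ pball p n ↔ ∑ i, |x i| ^ p.toReal ≤ 1 := by
  have ht : (1:ℝ) ≤ p.toReal := one_le_toReal hp hp'
  have ht0 : 0 < p.toReal := by linarith
  have hS : 0 ≤ ∑ i, |x i| ^ p.toReal :=
    Finset.sum_nonneg fun i _ => Real.rpow_nonneg (abs_nonneg _) _
  simp only [pball, Set.mem_setOf_eq, if_neg hp']
  constructor
  · intro h
    have := Real.rpow_le_rpow (Real.rpow_nonneg hS _) h ht0.le
    rwa [← Real.rpow_mul hS, inv_mul_cancel₀ ht0.ne', Real.rpow_one, Real.one_rpow] at this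
  · intro h
    exact Real.rpow_le_one hS h (by positivity)

lemma mem_pball_top {n : ℕ} (hn : 0 < n) {x : EuclideanSpace ℝ (Fin n)} :
    x ∈ pball ∞ n ↔ ∀ i, |x i| ≤ 1 := by
  have : Nonempty (Fin n) := ⟨⟨0, hn⟩⟩
  have he : x ∈ pball ⊤ n ↔ (⨆ i, |x i|) ≤ 1 := by simp [pball]
  rw [he]
  constructor
  · intro h i
    exact le_trans (le_ciSup (Set.Finite.bddAbove (Set.finite_range fun i => |x i|)) i) h
  · intro h
    exact ciSup_le h

lemma single_mem_pball {p : ℝ≥0∞} (hp : 1 ≤ p) {n : ℕ} (hn : 0 < n) (i : Fin n) :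
    (EuclideanSpace.single i (1:ℝ)) ∈ pball p n := by
  by_cases hp' : p = ∞
  · subst hp'
    rw [mem_pball_top hn]
    intro j
    rw [EuclideanSpace.single_apply]
    split <;> simp
  · rw [mem_pball_finite hp hp']
    have ht0 : 0 < p.toReal := by
      have := one_le_toReal hp hp'; linarith
    have : ∀ j : Fin n, |EuclideanSpace.single i (1:ℝ) j| ^ p.toReal
        = if j = i then (1:ℝ) else 0 := by
      intro j
      rw [EuclideanSpace.single_apply]
      split
      · simp
      · simp [Real.zero_rpow ht0.ne']
    rw [Finset.sum_congr rfl fun j _ => this j]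
    simp

lemma mem_absconv {n : ℕ} (hn : 0 < n) (x : Fin n → EuclideanSpace ℝ (Fin n))
    (c : Fin n → ℝ) (hc : ∑ j, |c j| ≤ 1) :
    ∑ j, c j • x j ∈ convexHull ℝ (Set.range x ∪ -Set.range x) := by
  set i0 : Fin n := ⟨0, hn⟩
  set δ : ℝ := 1 - ∑ j, |c j| with hδ
  have hδ0 : 0 ≤ δ := by simp only [hδ, sub_nonneg]; exact hc
  set w : Fin n ⊕ Fin n → ℝ := Sum.elim
    (fun j => max (c j) 0 + (if j = i0 then δ/2 else 0))
    (fun j => max (-c j) 0 + (if j = i0 then δ/2 else 0)) with hw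
  set z : Fin n ⊕ Fin n → EuclideanSpace ℝ (Fin n) :=
    Sum.elim x (fun j => -x j) with hz
  have hwnn : ∀ jb ∈ Finset.univ (α := Fin n ⊕ Fin n), 0 ≤ w jb := by
    rintro (j | j) _ <;>
    · apply add_nonneg (le_max_right _ _)
      split
      · linarith
      · exact le_refl 0
  have hsplit : ∀ j : Fin n, w (Sum.inl j) + w (Sum.inr j)
      = |c j| + (if j = i0 then δ else 0) := by
    intro j
    simp only [hw, Sum.elim_inl, Sum.elim_inr, ← max_zero_add_max_neg_zero_eq_abs_self]
    split <;> ring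
  have hwsum : ∑ jb : Fin n ⊕ Fin n, w jb = 1 := by
    rw [Fintype.sum_sum_type, ← Finset.sum_add_distrib]
    rw [Finset.sum_congr rfl fun j _ => hsplit j, Finset.sum_add_distrib]
    simp [hδ]
  have hzmem : ∀ jb ∈ Finset.univ (α := Fin n ⊕ Fin n),
      z jb ∈ (Set.range x ∪ -Set.range x : Set _) := by
    rintro (j | j) _
    · exact Or.inl (Set.mem_range_self j)
    · right
      rw [Set.mem_neg]
      simpa [hz] using Set.mem_range_self j
  have key : ∑ jb : Fin n ⊕ Fin n, w jb • z jb = ∑ j, c j • x j := by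
    rw [Fintype.sum_sum_type, ← Finset.sum_add_distrib]
    apply Finset.sum_congr rfl
    intro j _
    simp only [hw, hz, Sum.elim_inl, Sum.elim_inr]
    rw [smul_neg, ← sub_eq_add_neg, ← sub_smul]
    congr 1
    rw [add_sub_add_right_eq_sub]
    exact max_zero_sub_max_neg_zero_eq_self (c j)
  rw [← key]
  exact (convex_convexHull ℝ _).sum_mem hwnn hwsum
    (fun jb hjb => subset_convexHull ℝ _ (hzmem jb hjb))

lemma sum_abs_le_of_mem {q : ℝ≥0∞} (hq : 1 ≤ q) {n : ℕ} (hn : 0 < n)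
    {y : EuclideanSpace ℝ (Fin n)} (hy : y ∈ pball q n) :
    ∑ i, |y i| ≤ (n : ℝ) ^ (1 - q.toReal⁻¹) := by
  by_cases hq' : q = ∞
  · subst hq'
    rw [mem_pball_top hn] at hy
    simp only [ENNReal.toReal_top, inv_zero, sub_zero, Real.rpow_one]
    calc ∑ i, |y i| ≤ ∑ _i : Fin n, (1:ℝ) := Finset.sum_le_sum fun i _ => hy i
    _ = n := by simp
  · set t := q.toReal with htdef
    have ht1 : 1 ≤ t := one_le_toReal hq hq'
    rw [mem_pball_finite hq hq'] at hy
    rcases eq_or_lt_of_le ht1 with h1 | h1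
    · have : ∑ i, |y i| ≤ 1 := by
        calc ∑ i, |y i| = ∑ i, |y i| ^ t := by
              rw [← h1]; simp [Real.rpow_one]
        _ ≤ 1 := hy
      calc ∑ i, |y i| ≤ 1 := this
      _ ≤ (n:ℝ) ^ (1 - t⁻¹) := by
          apply Real.one_le_rpow
          · exact_mod_cast hn
          · rw [← h1]; norm_num
    · have hpq : t.HolderConjugate (Real.conjExponent t) :=
        Real.HolderConjugate.conjExponent h1
      have key := Real.inner_le_Lp_mul_Lq (Finset.univ) (fun i => |y i|) (fun _ => (1:ℝ)) hpq
      simp only [mul_one, abs_abs, abs_one, Real.one_rpow, Finset.sum_const,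
        Finset.card_univ, Fintype.card_fin, nsmul_eq_mul, mul_one] at key
      have h2 : (∑ i, |y i| ^ t) ^ (1/t) ≤ 1 :=
        Real.rpow_le_one (Finset.sum_nonneg fun i _ => Real.rpow_nonneg (abs_nonneg _) _) hy
          (by positivity)
      have h3 : ((n:ℝ)) ^ (1/(Real.conjExponent t)) = (n:ℝ) ^ (1 - t⁻¹) := by
        rw [one_div, hpq.one_sub_inv]
      calc ∑ i, |y i| ≤ (∑ i, |y i| ^ t) ^ (1/t) * ((n:ℝ)) ^ (1/(Real.conjExponent t)) := key
      _ ≤ 1 * ((n:ℝ)) ^ (1/(Real.conjExponent t)) := by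
          apply mul_le_mul_of_nonneg_right h2 (Real.rpow_nonneg (by positivity) _)
      _ = (n:ℝ) ^ (1 - t⁻¹) := by rw [one_mul, h3]

lemma sum_sq_le_of_mem_big {q : ℝ≥0∞} (hq : 2 ≤ q) {n : ℕ} (hn : 0 < n)
    {y : EuclideanSpace ℝ (Fin n)} (hy : y ∈ pball q n) :
    ∑ i, y i ^ 2 ≤ (n : ℝ) ^ (1 - 2 * q.toReal⁻¹) := by
  have hq1 : (1:ℝ≥0∞) ≤ q := le_trans (by norm_num) hq
  by_cases hq' : q = ∞
  · subst hq'
    rw [mem_pball_top hn] at hy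
    simp only [ENNReal.toReal_top, inv_zero, mul_zero, sub_zero, Real.rpow_one]
    calc ∑ i, y i ^ 2 ≤ ∑ _i : Fin n, (1:ℝ) := by
          apply Finset.sum_le_sum
          intro i _
          rw [← sq_abs]
          exact pow_le_one₀ (abs_nonneg _) (hy i)
    _ = n := by simp
  · set t := q.toReal with htdef
    have ht2 : 2 ≤ t := by
      rw [htdef, show (2:ℝ) = (2:ℝ≥0∞).toReal by norm_num]
      exact ENNReal.toReal_mono hq' hq
    rw [mem_pball_finite hq1 hq'] at hy
    have habs : ∀ i : Fin n, |y i| ^ t = |y i| ^ t := fun i => rfl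
    rcases eq_or_lt_of_le ht2 with h2 | h2
    · have : ∑ i, y i ^ 2 ≤ 1 := by
        calc ∑ i, y i ^ 2 = ∑ i, |y i| ^ t := by
              apply Finset.sum_congr rfl
              intro i _
              rw [← h2, show ((2:ℝ)) = ((2:ℕ):ℝ) by norm_num, Real.rpow_natCast, sq_abs]
        _ ≤ 1 := hy
      calc ∑ i, y i ^ 2 ≤ 1 := this
      _ ≤ (n:ℝ) ^ (1 - 2*t⁻¹) := by
          apply Real.one_le_rpow (by exact_mod_cast hn)
          rw [← h2]; norm_num
    · set r := t/2 with hrdef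
      have hr1 : 1 < r := by rw [hrdef]; linarith
      have hpq : r.HolderConjugate (Real.conjExponent r) :=
        Real.HolderConjugate.conjExponent hr1
      have key := Real.inner_le_Lp_mul_Lq (Finset.univ) (fun i => y i ^ 2) (fun _ => (1:ℝ)) hpq
      simp only [mul_one, abs_one, Real.one_rpow, Finset.sum_const,
        Finset.card_univ, Fintype.card_fin, nsmul_eq_mul, mul_one] at key
      have heq : ∀ i : Fin n, |y i ^ 2| ^ r = |y i| ^ t := by
        intro i
        rw [abs_pow, show |y i| ^ 2 = |y i| ^ ((2:ℕ):ℝ) from (Real.rpow_natCast _ 2).symm,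
          ← Real.rpow_mul (abs_nonneg _)]
        norm_num [hrdef]
        ring_nf
      rw [Finset.sum_congr rfl fun i _ => heq i] at key
      have h2' : (∑ i, |y i| ^ t) ^ (1/r) ≤ 1 :=
        Real.rpow_le_one (Finset.sum_nonneg fun i _ => Real.rpow_nonneg (abs_nonneg _) _) hy
          (by positivity)
      have h3 : ((n:ℝ)) ^ (1/(Real.conjExponent r)) = (n:ℝ) ^ (1 - 2*t⁻¹) := by
        rw [one_div, ← hpq.one_sub_inv]
        congr 1
        rw [hrdef]
        rw [inv_div]
        ring
      calc ∑ i, y i ^ 2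
          ≤ (∑ i, |y i| ^ t) ^ (1/r) * ((n:ℝ)) ^ (1/(Real.conjExponent r)) := key
      _ ≤ 1 * ((n:ℝ)) ^ (1/(Real.conjExponent r)) :=
          mul_le_mul_of_nonneg_right h2' (Real.rpow_nonneg (by positivity) _)
      _ = (n:ℝ) ^ (1 - 2*t⁻¹) := by rw [one_mul, h3]

lemma sum_sq_le_of_mem_small {q : ℝ≥0∞} (hq : 1 ≤ q) (hq2 : q ≤ 2) {n : ℕ} (hn : 0 < n)
    {y : EuclideanSpace ℝ (Fin n)} (hy : y ∈ pball q n) :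
    ∑ i, y i ^ 2 ≤ 1 := by
  have hq' : q ≠ ∞ := by
    intro h
    rw [h] at hq2
    exact (by norm_num : ¬ ((⊤:ℝ≥0∞) ≤ 2)) hq2
  set t := q.toReal with htdef
  have ht1 : 1 ≤ t := one_le_toReal hq hq'
  have ht2 : t ≤ 2 := by
    rw [htdef, show (2:ℝ) = (2:ℝ≥0∞).toReal by norm_num]
    exact ENNReal.toReal_mono (by norm_num) hq2
  rw [mem_pball_finite hq hq'] at hy
  have hle1 : ∀ i : Fin n, |y i| ≤ 1 := by
    intro i
    by_contra hcon
    push_neg at hcon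
    have h1 : 1 < |y i| ^ t := by
      exact (Real.one_lt_rpow_iff_of_pos (by linarith)).mpr
        (Or.inl ⟨hcon, by linarith⟩)
    have : |y i| ^ t ≤ ∑ j, |y j| ^ t :=
      Finset.single_le_sum (fun j _ => Real.rpow_nonneg (abs_nonneg _) _) (Finset.mem_univ i)
    linarith
  calc ∑ i, y i ^ 2 ≤ ∑ i, |y i| ^ t := by
        apply Finset.sum_le_sum
        intro i _
        rcases eq_or_lt_of_le (abs_nonneg (y i)) with h0 | h0
        · rw [← sq_abs, ← h0]
          simp [Real.zero_rpow (by linarith : t ≠ 0)]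
        · calc y i ^ 2 = |y i| ^ ((2:ℕ):ℝ) := by rw [Real.rpow_natCast, sq_abs]
          _ ≤ |y i| ^ t := Real.rpow_le_rpow_of_exponent_ge h0 (hle1 i) (by exact_mod_cast ht2)
  _ ≤ 1 := hy

noncomputable def fvec (n : ℕ) (j : Fin n) : EuclideanSpace ℝ (Fin n) :=
  WithLp.toLp 2 (fun k => Real.cos (2 * π * j * k / n) + Real.sin (2 * π * j * k / n))

lemma fvec_abs_le (n : ℕ) (j k : Fin n) : |fvec n j k| ≤ Real.sqrt 2 := by
  set t : ℝ := 2 * π * j * k / n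
  have h1 : (fvec n j k) ^ 2 ≤ 2 := by
    rw [show fvec n j k = Real.cos t + Real.sin t from rfl]
    nlinarith [Real.sin_sq_add_cos_sq t, sq_nonneg (Real.cos t - Real.sin t)]
  calc |fvec n j k| = Real.sqrt ((fvec n j k)^2) := (Real.sqrt_sq_eq_abs _).symm
  _ ≤ Real.sqrt 2 := Real.sqrt_le_sqrt h1

lemma fvec_symm (n : ℕ) (j k : Fin n) : fvec n j k = fvec n k j := by
  have : 2 * π * (j:ℝ) * (k:ℝ) / n = 2 * π * (k:ℝ) * (j:ℝ) / n := by ring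
  simp only [fvec, WithLp.ofLp_toLp, this]

/-- geometric sum over `Fin n`. -/
lemma geom_sum_fin {n : ℕ} (hn : 0 < n) (z : ℂ) (hz : z ^ n = 1) :
    ∑ k : Fin n, z ^ (k : ℕ) = if z = 1 then (n : ℂ) else 0 := by
  rw [Fin.sum_univ_eq_sum_range]
  split
  · subst ‹z = 1›; simp
  · rw [_root_.geom_sum_eq ‹z ≠ 1›, hz]
    simp

lemma fvec_ortho (n : ℕ) (hn : 0 < n) (j j' : Fin n) :
    ∑ k, fvec n j k * fvec n j' k = if j = j' then (n : ℝ) else 0 := by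
  set ω : ℂ := Complex.exp (2 * π * Complex.I / n) with hω
  have hωn : ω ^ n = 1 := by
    rw [hω, ← Complex.exp_nat_mul]
    rw [show (n:ℂ) * (2 * π * Complex.I / n) = 2 * π * Complex.I by
      rw [mul_div_assoc']
      exact mul_div_cancel_left₀ _ (Nat.cast_ne_zero.mpr hn.ne')]
    exact Complex.exp_two_pi_mul_I
  have hprim : IsPrimitiveRoot ω n := Complex.isPrimitiveRoot_exp n hn.ne'
  -- fvec in terms of ω
  have hfvec : ∀ (a b : Fin n), fvec n a b = ((1 - Complex.I) * ω ^ ((a:ℕ) * (b:ℕ))).re := by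
    intro a b
    have hpow : ω ^ ((a:ℕ) * (b:ℕ)) =
        Complex.exp ((2 * π * (a:ℝ) * (b:ℝ) / n : ℝ) * Complex.I) := by
      rw [hω, ← Complex.exp_nat_mul]
      congr 1
      push_cast
      ring
    rw [hpow]
    have hre := Complex.exp_ofReal_mul_I_re (2 * π * (a:ℝ) * (b:ℝ) / n)
    have him := Complex.exp_ofReal_mul_I_im (2 * π * (a:ℝ) * (b:ℝ) / n)
    set z := Complex.exp ((2 * π * (a:ℝ) * (b:ℝ) / n : ℝ) * Complex.I)
    have : ((1 - Complex.I) * z).re = z.re + z.im := by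
      simp [Complex.sub_re, Complex.mul_re, Complex.one_re, Complex.I_re, Complex.I_im]
    rw [this, hre, him]
    rfl
  -- product of real parts
  have hprod : ∀ z w : ℂ, z.re * w.re = ((z*w).re + (z * (starRingEnd ℂ) w).re)/2 := by
    intro z w
    simp [Complex.mul_re, Complex.conj_re, Complex.conj_im]
  have hconj : ∀ m : ℕ, (starRingEnd ℂ) (ω ^ m) = ω⁻¹ ^ m := by
    intro m
    rw [map_pow]
    congr 1
    rw [hω, ← Complex.exp_conj]
    rw [show (starRingEnd ℂ) (2 * π * Complex.I / n) = -(2 * π * Complex.I / n) by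
      simp only [map_div₀, map_mul, Complex.conj_I, Complex.conj_ofReal, map_ofNat, map_natCast]
      ring]
    rw [← Complex.exp_neg]
  have hωne : ω ≠ 0 := Complex.exp_ne_zero _
  set s : ℕ := (j:ℕ) + (j':ℕ) with hs
  set ζ : ℂ := ω ^ (j:ℕ) * (ω⁻¹) ^ (j':ℕ) with hζ
  have hA : ∀ k : Fin n, fvec n j k * fvec n j' k
      = (((1-Complex.I)^2 * (ω ^ s) ^ (k:ℕ)).re + ((2:ℂ) * ζ ^ (k:ℕ)).re)/2 := by
    intro k
    rw [hfvec j k, hfvec j' k, hprod]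
    have e1 : (1-Complex.I) * ω ^ ((j:ℕ)*(k:ℕ)) * ((1-Complex.I) * ω ^ ((j':ℕ)*(k:ℕ)))
        = (1-Complex.I)^2 * (ω ^ s) ^ (k:ℕ) := by
      rw [← pow_mul, hs, add_mul, pow_add]
      ring
    have hc1 : (starRingEnd ℂ) (1 - Complex.I) = 1 + Complex.I := by
      simp [map_sub, Complex.conj_I, sub_neg_eq_add]
    have h2 : (1 - Complex.I) * (1 + Complex.I) = 2 := by
      ring_nf
      rw [Complex.I_sq]
      ring
    have e2 : (1-Complex.I) * ω ^ ((j:ℕ)*(k:ℕ)) *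
          ((starRingEnd ℂ) ((1-Complex.I) * ω ^ ((j':ℕ)*(k:ℕ))))
        = 2 * ζ ^ (k:ℕ) := by
      rw [map_mul, hconj, hc1]
      calc (1 - Complex.I) * ω ^ ((j:ℕ) * (k:ℕ)) *
            ((1 + Complex.I) * ω⁻¹ ^ ((j':ℕ) * (k:ℕ)))
          = ((1 - Complex.I) * (1 + Complex.I)) *
            (ω ^ ((j:ℕ) * (k:ℕ)) * ω⁻¹ ^ ((j':ℕ) * (k:ℕ))) := by ring
        _ = 2 * ζ ^ (k:ℕ) := by
            rw [h2, hζ, mul_pow, ← pow_mul, ← pow_mul]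
    rw [e1, e2]
  rw [Finset.sum_congr rfl fun k _ => hA k]
  rw [← Finset.sum_div, Finset.sum_add_distrib, ← Complex.re_sum, ← Complex.re_sum,
    ← Finset.mul_sum, ← Finset.mul_sum]
  have hωs_pow : (ω ^ s) ^ n = 1 := by
    rw [← pow_mul, mul_comm, pow_mul, hωn, one_pow]
  have hζn : ζ ^ n = 1 := by
    rw [hζ, mul_pow, ← pow_mul, ← pow_mul, mul_comm ((j:ℕ)) n, mul_comm ((j':ℕ)) n,
      pow_mul, pow_mul, hωn, inv_pow, hωn]
    simp
  rw [geom_sum_fin hn _ hωs_pow, geom_sum_fin hn _ hζn]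
  have hre0 : ((1-Complex.I)^2 * (if (ω ^ s) = 1 then (n:ℂ) else 0)).re = 0 := by
    split <;> simp [pow_two, Complex.mul_re, Complex.sub_re, Complex.sub_im,
      Complex.one_re, Complex.one_im, Complex.I_re, Complex.I_im] <;> ring
  rw [hre0]
  have hζ1 : ζ = 1 ↔ j = j' := by
    constructor
    · intro h
      rw [hζ, inv_pow, mul_inv_eq_one₀ (pow_ne_zero _ hωne)] at h
      exact Fin.ext (hprim.pow_inj j.isLt j'.isLt h)
    · rintro rfl
      rw [hζ, inv_pow, mul_inv_cancel₀ (pow_ne_zero _ hωne)]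
  by_cases hjj : j = j'
  · rw [if_pos (hζ1.mpr hjj), if_pos hjj]
    simp
  · rw [if_neg (fun h => hjj (hζ1.mp h)), if_neg hjj]
    simp

lemma fvec_ortho' {n : ℕ} (hn : 0 < n) (l k : Fin n) :
    ∑ j, fvec n j l * fvec n j k = if l = k then (n:ℝ) else 0 := by
  calc ∑ j, fvec n j l * fvec n j k = ∑ j, fvec n l j * fvec n k j :=
        Finset.sum_congr rfl fun j _ => by rw [fvec_symm n j l, fvec_symm n j k]
  _ = if l = k then (n:ℝ) else 0 := fvec_ortho n hn l k

lemma fvec_expansion {n : ℕ} (hn : 0 < n) (y : EuclideanSpace ℝ (Fin n)) :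
    ∃ c : Fin n → ℝ, y = ∑ j, c j • fvec n j ∧
      ∑ j, |c j| ≤ Real.sqrt (∑ i, y i ^ 2) := by
  have hnne : (n:ℝ) ≠ 0 := Nat.cast_ne_zero.mpr hn.ne'
  refine ⟨fun j => (∑ k, fvec n j k * y k)/n, ?_, ?_⟩
  · ext k
    have happ : (∑ j, ((∑ l, fvec n j l * y l)/n) • fvec n j) k
        = ∑ j, ((∑ l, fvec n j l * y l)/n) * fvec n j k := by
      rw [WithLp.ofLp_sum, Finset.sum_apply k Finset.univ]
      rfl
    rw [happ]
    symm
    have step1 : ∀ j : Fin n, ((∑ l, fvec n j l * y l)/n) * fvec n j k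
        = (∑ l, y l * (fvec n j l * fvec n j k))/n := by
      intro j
      rw [div_mul_eq_mul_div, Finset.sum_mul]
      congr 1
      apply Finset.sum_congr rfl
      intro l _
      ring
    calc ∑ j, ((∑ l, fvec n j l * y l)/n) * fvec n j k
        = (∑ j, ∑ l, y l * (fvec n j l * fvec n j k))/n := by
          rw [Finset.sum_congr rfl fun j _ => step1 j, ← Finset.sum_div]
      _ = (∑ l, y l * ∑ j, (fvec n j l * fvec n j k))/n := by
          rw [Finset.sum_comm]
          congr 1
          apply Finset.sum_congr rfl
          intro l _
          rw [Finset.mul_sum]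
      _ = y k := by
          rw [Finset.sum_congr rfl fun l _ => by rw [fvec_ortho' hn l k]]
          simp [hnne]
  · set c : Fin n → ℝ := fun j => (∑ k, fvec n j k * y k)/n with hc
    have hP : ∑ j, c j^2 = (∑ i, y i^2)/n := by
      have expand : ∀ j : Fin n, c j ^ 2
          = (∑ k, ∑ l, (y k * y l) * (fvec n j k * fvec n j l))/(n*n) := by
        intro j
        rw [sq, show c j = (∑ k, fvec n j k * y k)/n from rfl,
          div_mul_div_comm, Finset.sum_mul_sum]
        congr 1
        apply Finset.sum_congr rfl; intro k _
        apply Finset.sum_congr rfl; intro l _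
        ring
      rw [Finset.sum_congr rfl fun j _ => expand j, ← Finset.sum_div]
      rw [Finset.sum_comm]
      have swap2 : ∀ k : Fin n, ∑ j, ∑ l, (y k * y l) * (fvec n j k * fvec n j l)
          = ∑ l, (y k * y l) * ∑ j, fvec n j k * fvec n j l := by
        intro k
        rw [Finset.sum_comm]
        apply Finset.sum_congr rfl
        intro l _
        rw [Finset.mul_sum]
      rw [Finset.sum_congr rfl fun k _ => swap2 k]
      have inner : ∀ k : Fin n, ∑ l, (y k * y l) * (∑ j, fvec n j k * fvec n j l)
          = y k^2 * n := by
        intro k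
        have h1 : ∀ l : Fin n, (y k * y l) * (∑ j, fvec n j k * fvec n j l)
            = if k = l then y k * y l * n else 0 := by
          intro l
          rw [fvec_ortho' hn k l]
          split
          · ring
          · ring
        rw [Finset.sum_congr rfl fun l _ => h1 l, Finset.sum_ite_eq]
        simp only [Finset.mem_univ, if_true]
        ring
      rw [Finset.sum_congr rfl fun k _ => inner k, ← Finset.sum_mul]
      field_simp
    have hCS := Finset.sum_mul_sq_le_sq_mul_sq Finset.univ (fun j => |c j|) (fun _ => (1:ℝ))
    simp only [mul_one, one_pow, sq_abs, Finset.sum_const, Finset.card_univ,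
      Fintype.card_fin, nsmul_eq_mul] at hCS
    have h1 : (∑ j, |c j|)^2 ≤ ∑ i, y i^2 := by
      calc (∑ j, |c j|)^2 ≤ (∑ j, c j^2) * n := hCS
      _ = ∑ i, y i^2 := by rw [hP]; field_simp
    calc ∑ j, |c j| = Real.sqrt ((∑ j, |c j|)^2) :=
          (Real.sqrt_sq (Finset.sum_nonneg fun j _ => abs_nonneg _)).symm
    _ ≤ Real.sqrt (∑ i, y i^2) := Real.sqrt_le_sqrt h1

lemma factorsAt_fourier {p q : ℝ≥0∞} (hp : 1 ≤ p) (hq : 1 ≤ q) {n : ℕ} (hn : 0 < n)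
    {ε : ℝ} (hε : 0 ≤ ε)
    (h : ∀ y ∈ pball q n, Real.sqrt 2 * (n:ℝ) ^ p.toReal⁻¹ * (ε * Real.sqrt (∑ i, y i ^ 2)) ≤ 1) :
    FactorsAt p q n ε := by
  set M : ℝ := Real.sqrt 2 * (n:ℝ) ^ p.toReal⁻¹ with hM
  have hnpos : (0:ℝ) < n := Nat.cast_pos.mpr hn
  have hMpos : 0 < M := by
    apply mul_pos (Real.sqrt_pos.mpr (by norm_num))
    exact Real.rpow_pos_of_pos hnpos _
  set x : Fin n → EuclideanSpace ℝ (Fin n) := fun j => M⁻¹ • fvec n j with hx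
  have hxk : ∀ j k, x j k = M⁻¹ * fvec n j k := fun j k => rfl
  have habs : ∀ j k, |x j k| ≤ (((n:ℝ) ^ p.toReal⁻¹))⁻¹ := by
    intro j k
    rw [hxk, abs_mul, abs_of_pos (inv_pos.mpr hMpos)]
    calc M⁻¹ * |fvec n j k| ≤ M⁻¹ * Real.sqrt 2 :=
          mul_le_mul_of_nonneg_left (fvec_abs_le n j k) (inv_pos.mpr hMpos).le
    _ = (((n:ℝ) ^ p.toReal⁻¹))⁻¹ := by
        rw [hM, mul_inv, mul_comm ((Real.sqrt 2)⁻¹) _, mul_assoc,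
          inv_mul_cancel₀ (Real.sqrt_ne_zero'.mpr (by norm_num)), mul_one]
  refine ⟨x, ?_, ?_⟩
  · intro j
    by_cases hp' : p = ∞
    · subst hp'
      rw [mem_pball_top hn]
      intro k
      have := habs j k
      simpa using this
    · rw [mem_pball_finite hp hp']
      have hpt : 0 < p.toReal := lt_of_lt_of_le one_pos (one_le_toReal hp hp')
      calc ∑ k, |x j k| ^ p.toReal
          ≤ ∑ _k : Fin n, ((((n:ℝ) ^ p.toReal⁻¹))⁻¹) ^ p.toReal := by
            apply Finset.sum_le_sum
            intro k _
            exact Real.rpow_le_rpow (abs_nonneg _) (habs j k) hpt.le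
      _ = 1 := by
          rw [Finset.sum_const, Finset.card_univ, Fintype.card_fin, nsmul_eq_mul]
          rw [← Real.rpow_neg hnpos.le, ← Real.rpow_mul hnpos.le]
          rw [show -p.toReal⁻¹ * p.toReal = -1 by field_simp]
          rw [show ((-1:ℝ)) = ((-1 : ℤ) : ℝ) by norm_num, Real.rpow_intCast]
          rw [zpow_neg_one]
          exact mul_inv_cancel₀ (ne_of_gt hnpos)
  · intro w hw
    rcases Set.mem_smul_set.mp hw with ⟨y, hy, rfl⟩
    obtain ⟨c, hcy, hcb⟩ := fvec_expansion hn y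
    have hrepr : ε • y = ∑ j, (ε * c j * M) • x j := by
      rw [hcy, Finset.smul_sum]
      apply Finset.sum_congr rfl
      intro j _
      rw [hx]
      rw [smul_smul, smul_smul]
      congr 1
      field_simp
    rw [hrepr]
    apply mem_absconv hn
    have : ∑ j, |ε * c j * M| = ε * M * ∑ j, |c j| := by
      rw [Finset.mul_sum]
      apply Finset.sum_congr rfl
      intro j _
      rw [abs_mul, abs_mul, abs_of_nonneg hε, abs_of_pos hMpos]
      ring
    rw [this]
    calc ε * M * ∑ j, |c j| ≤ ε * M * Real.sqrt (∑ i, y i^2) := by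
          apply mul_le_mul_of_nonneg_left hcb (by positivity)
    _ = M * (ε * Real.sqrt (∑ i, y i^2)) := by ring
    _ ≤ 1 := h y hy

lemma factorsAt_basis {p q : ℝ≥0∞} (hp : 1 ≤ p) (hq : 1 ≤ q) {n : ℕ} (hn : 0 < n)
    {ε : ℝ} (hε : 0 ≤ ε)
    (h : ∀ y ∈ pball q n, ε * ∑ i, |y i| ≤ 1) :
    FactorsAt p q n ε := by
  refine ⟨fun i => EuclideanSpace.single i (1:ℝ), fun i => single_mem_pball hp hn i, ?_⟩
  intro w hw
  rcases Set.mem_smul_set.mp hw with ⟨y, hy, rfl⟩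
  have hrepr : ε • y = ∑ i, (ε * y i) • EuclideanSpace.single i (1:ℝ) := by
    ext k
    have happ : (∑ i, (ε * y i) • EuclideanSpace.single i (1:ℝ)) k
        = ∑ i, (ε * y i) * (EuclideanSpace.single i (1:ℝ) k) := by
      rw [WithLp.ofLp_sum, Finset.sum_apply k Finset.univ]
      rfl
    rw [happ]
    symm
    simp [EuclideanSpace.single_apply, mul_ite, Finset.sum_ite_eq]
  rw [hrepr]
  apply mem_absconv hn
  calc ∑ i, |ε * y i| = ε * ∑ i, |y i| := by
        rw [Finset.mul_sum]
        exact Finset.sum_congr rfl fun i _ => by rw [abs_mul, abs_of_nonneg hε]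
  _ ≤ 1 := h y hy

/-- For all `1 ≤ p, q ≤ ∞` there is a constant `C_{p,q}` such that
`Γ_n(B_p^n, B_q^n) ≤ C_{p,q}·n^θ`, i.e. there exist `x_1, …, x_n ∈ B_p^n` with
`(C_{p,q}^{-1}·n^{-θ})·B_q^n ⊆ absconv(x_1, …, x_n)`, where
`θ = 1/2 + 1/p - 1/q` if `2 ≤ p, q ≤ ∞`; `θ = 1 - 1/q` if `1 ≤ p ≤ 2`;
`θ = 1 - 1/q` if `1 ≤ q ≤ 2 ≤ p ≤ ∞` and `p' > q`; `θ = 1/p` if `1 ≤ q ≤ 2 ≤ p ≤ ∞` and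
`p' ≤ q` (with `1/∞ = 0`, and `p' = p/(p-1)` the conjugate exponent of `p`). -/
theorem stmt10 (p q : ℝ≥0∞) (hp : 1 ≤ p) (hq : 1 ≤ q) :
    ∃ C : ℝ, 0 < C ∧ ∀ n : ℕ, 0 < n →
      (2 ≤ p ∧ 2 ≤ q →
        FactorsAt p q n (C⁻¹ * (n : ℝ) ^ (-(1 / 2 + p.toReal⁻¹ - q.toReal⁻¹)))) ∧
      (p ≤ 2 →
        FactorsAt p q n (C⁻¹ * (n : ℝ) ^ (-(1 - q.toReal⁻¹)))) ∧
      (q ≤ 2 ∧ 2 ≤ p ∧ q.toReal < (if p = ∞ then 1 else p.toReal / (p.toReal - 1)) →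
        FactorsAt p q n (C⁻¹ * (n : ℝ) ^ (-(1 - q.toReal⁻¹)))) ∧
      (q ≤ 2 ∧ 2 ≤ p ∧ (if p = ∞ then 1 else p.toReal / (p.toReal - 1)) ≤ q.toReal →
        FactorsAt p q n (C⁻¹ * (n : ℝ) ^ (-(p.toReal⁻¹)))) := by
  refine ⟨2, by norm_num, ?_⟩
  intro n hn
  have hnpos : (0:ℝ) < n := Nat.cast_pos.mpr hn
  have hsqrt2 : Real.sqrt 2 ≤ 2 := by
    nlinarith [Real.sq_sqrt (by norm_num : (0:ℝ) ≤ 2), Real.sqrt_nonneg 2]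
  have hsqrt2' : 0 ≤ Real.sqrt 2 := Real.sqrt_nonneg 2
  set a := p.toReal⁻¹ with ha
  set b := q.toReal⁻¹ with hb
  have hbasis : FactorsAt p q n ((2:ℝ)⁻¹ * (n : ℝ) ^ (-(1 - b))) := by
    apply factorsAt_basis hp hq hn (by positivity)
    intro y hy
    calc (2:ℝ)⁻¹ * (n:ℝ) ^ (-(1 - b)) * ∑ i, |y i|
        ≤ (2:ℝ)⁻¹ * (n:ℝ) ^ (-(1 - b)) * (n:ℝ) ^ (1 - b) := by
          gcongr
          exact sum_abs_le_of_mem hq hn hy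
    _ = (2:ℝ)⁻¹ * (n:ℝ) ^ (-(1 - b) + (1 - b)) := by
        rw [mul_assoc, ← Real.rpow_add hnpos]
    _ ≤ 1 := by norm_num
  refine ⟨?_, fun _ => hbasis, fun _ => hbasis, ?_⟩
  · rintro ⟨hp2, hq2⟩
    apply factorsAt_fourier hp hq hn (by positivity)
    intro y hy
    have hs : Real.sqrt (∑ i, y i ^ 2) ≤ (n:ℝ) ^ ((1 - 2*b)/2) := by
      have h2 : Real.sqrt ((n:ℝ) ^ (1 - 2*b)) = (n:ℝ) ^ ((1 - 2*b)/2) := by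
        rw [Real.sqrt_eq_rpow, ← Real.rpow_mul hnpos.le]
        congr 1
        ring
      rw [← h2]
      exact Real.sqrt_le_sqrt (sum_sq_le_of_mem_big hq2 hn hy)
    calc Real.sqrt 2 * (n:ℝ) ^ a * ((2:ℝ)⁻¹ * (n:ℝ) ^ (-(1/2 + a - b)) * Real.sqrt (∑ i, y i ^ 2))
        ≤ Real.sqrt 2 * (n:ℝ) ^ a *
          ((2:ℝ)⁻¹ * (n:ℝ) ^ (-(1/2 + a - b)) * (n:ℝ) ^ ((1 - 2*b)/2)) := by
          gcongr
    _ = Real.sqrt 2 * (2:ℝ)⁻¹ *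
          ((n:ℝ) ^ a * (n:ℝ) ^ (-(1/2 + a - b)) * (n:ℝ) ^ ((1 - 2*b)/2)) := by ring
    _ = Real.sqrt 2 * (2:ℝ)⁻¹ * (n:ℝ) ^ (a + (-(1/2 + a - b)) + (1 - 2*b)/2) := by
        rw [← Real.rpow_add hnpos, ← Real.rpow_add hnpos]
    _ = Real.sqrt 2 * (2:ℝ)⁻¹ := by
        rw [show a + (-(1/2 + a - b)) + (1 - 2*b)/2 = 0 by ring, Real.rpow_zero, mul_one]
    _ ≤ 1 := by linarith
  · rintro ⟨hq2, hp2, _⟩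
    apply factorsAt_fourier hp hq hn (by positivity)
    intro y hy
    have hs : Real.sqrt (∑ i, y i ^ 2) ≤ 1 :=
      Real.sqrt_le_one.mpr (sum_sq_le_of_mem_small hq hq2 hn hy)
    calc Real.sqrt 2 * (n:ℝ) ^ a * ((2:ℝ)⁻¹ * (n:ℝ) ^ (-a) * Real.sqrt (∑ i, y i ^ 2))
        ≤ Real.sqrt 2 * (n:ℝ) ^ a * ((2:ℝ)⁻¹ * (n:ℝ) ^ (-a) * 1) := by
          gcongr
    _ = Real.sqrt 2 * (2:ℝ)⁻¹ * ((n:ℝ) ^ a * (n:ℝ) ^ (-a)) := by ring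
    _ = Real.sqrt 2 * (2:ℝ)⁻¹ := by
        rw [← Real.rpow_add hnpos, show a + (-a) = 0 by ring, Real.rpow_zero, mul_one]
    _ ≤ 1 := by linarith
end
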